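/- (Corollary to Theorem B.1, Trotterized form) For all real a, ε, μ, μ', τ₀, b, φ₀, all integers j and k, every natural number M, all real step sizes c₁,…,c_M, and all real times τ₁,…,τ_M, the ordered product of matrix exponentials defining the Trotterized propagator satisfies ∏_{m=1}^{M} exp(−i c_m · h(b + 2πj/N, φ₀ + 2πk/N, τ_m)) = Z^{j} X^{k} · ( ∏_{m=1}^{M} exp(−i c_m · h(b, φ₀, τ_m)) ) · X^{−k} Z^{−j}, where both products are taken in the same fixed order. -/

import Mathlib

open Matrix Complex

noncomputable section

/-- `ω = exp(2πi/N)`. -/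
def omegaN (N : ℕ) : ℂ := Complex.exp (2 * Real.pi * Complex.I / N)

/-- The shift matrix `X` with entries `X j k = 1` iff `j ≡ k+1 (mod N)`. -/
def shiftX (N : ℕ) : Matrix (Fin N) (Fin N) ℂ :=
  Matrix.of fun j k => if (j : ℕ) = ((k : ℕ) + 1) % N then 1 else 0

/-- The clock matrix `Z = diag(ω^j)`. -/
def clockZ (N : ℕ) : Matrix (Fin N) (Fin N) ℂ :=
  Matrix.diagonal fun j => omegaN N ^ (j : ℕ)


/-- The unperturbed Harper Hamiltonian in clock-and-shift form:
`h₀(b,φ₀) = a·I − (a/2)(e^{ib} X + e^{−ib} X†) − (ε/2)(e^{−iφ₀} Z + e^{iφ₀} Z†)`. -/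
def harperH0 (N : ℕ) (a ε b φ₀ : ℝ) : Matrix (Fin N) (Fin N) ℂ :=
  (a : ℂ) • (1 : Matrix (Fin N) (Fin N) ℂ)
    - ((a : ℂ) / 2) • (Complex.exp (Complex.I * b) • shiftX N
        + Complex.exp (-(Complex.I * b)) • (shiftX N)ᴴ)
    - ((ε : ℂ) / 2) • (Complex.exp (-(Complex.I * φ₀)) • clockZ N
        + Complex.exp (Complex.I * φ₀) • (clockZ N)ᴴ)


/-- The time-dependent perturbation in clock-and-shift form:
`h₁(φ₀,τ) = −((μ+μ~)/2)(e^{−iφ₀} Z + e^{iφ₀} Z†)·cos(τ−τ₀)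
          + ((μ~−μ)/(2i))(e^{−iφ₀} Z − e^{iφ₀} Z†)·sin(τ−τ₀)`. -/
def harperH1 (N : ℕ) (μ μ2 τ₀ φ₀ τ : ℝ) : Matrix (Fin N) (Fin N) ℂ :=
  (-((((μ : ℂ) + μ2) / 2) * (Real.cos (τ - τ₀) : ℂ))) •
      (Complex.exp (-(Complex.I * φ₀)) • clockZ N
        + Complex.exp (Complex.I * φ₀) • (clockZ N)ᴴ)
    + (((((μ2 : ℂ) - μ) / (2 * Complex.I))) * (Real.sin (τ - τ₀) : ℂ)) •
      (Complex.exp (-(Complex.I * φ₀)) • clockZ N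
        - Complex.exp (Complex.I * φ₀) • (clockZ N)ᴴ)

/-- The full time-dependent Hamiltonian of the periodically perturbed Harper model. -/
def harperH (N : ℕ) (a ε μ μ2 τ₀ b φ₀ τ : ℝ) : Matrix (Fin N) (Fin N) ℂ :=
  harperH0 N a ε b φ₀ + harperH1 N μ μ2 τ₀ φ₀ τ

lemma omegaN_ne_zero (N : ℕ) : omegaN N ≠ 0 := Complex.exp_ne_zero _

lemma omegaN_pow_N (N : ℕ) (hN : 0 < N) : omegaN N ^ N = 1 := by
  rw [omegaN, ← Complex.exp_nat_mul]
  have hNC : (N : ℂ) ≠ 0 := Nat.cast_ne_zero.mpr hN.ne'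
  rw [show (N : ℂ) * (2 * Real.pi * Complex.I / N) = 2 * Real.pi * Complex.I by
    field_simp]
  exact Complex.exp_two_pi_mul_I

lemma omegaN_pow_mod (N : ℕ) (hN : 0 < N) (m : ℕ) :
    omegaN N ^ (m % N) = omegaN N ^ m := by
  conv_rhs => rw [← Nat.div_add_mod m N]
  rw [pow_add, pow_mul, omegaN_pow_N N hN, one_pow, one_mul]

lemma omegaN_mul_conj (N : ℕ) : omegaN N * (starRingEnd ℂ) (omegaN N) = 1 := by
  rw [omegaN, ← Complex.exp_conj, ← Complex.exp_add]
  rw [show (starRingEnd ℂ) (2 * Real.pi * Complex.I / N) = -(2 * Real.pi * Complex.I / N) by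
    simp [map_div₀, _root_.map_mul, Complex.conj_I, Complex.conj_ofReal, map_ofNat]; ring]
  simp

lemma shiftX_apply (N : ℕ) [NeZero N] (j k : Fin N) :
    shiftX N j k = if j = k + 1 then 1 else 0 := by
  rw [shiftX, Matrix.of_apply]
  congr 1
  simp only [eq_iff_iff, Fin.ext_iff, Fin.add_def, Fin.val_one', Fin.val_mk, Nat.add_mod_mod]

lemma pow_mod_eq {c : ℂ} {N : ℕ} (hc : c ^ N = 1) (m : ℕ) : c ^ (m % N) = c ^ m := by
  conv_rhs => rw [← Nat.div_add_mod m N]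
  rw [pow_add, pow_mul, hc, one_pow, one_mul]

lemma conj_omegaN (N : ℕ) : (starRingEnd ℂ) (omegaN N) = (omegaN N)⁻¹ :=
  eq_inv_of_mul_eq_one_left (by rw [mul_comm]; exact omegaN_mul_conj N)

lemma inv_omegaN_pow_N (N : ℕ) (hN : 0 < N) : ((omegaN N)⁻¹) ^ N = 1 := by
  rw [inv_pow, omegaN_pow_N N hN, inv_one]

lemma clockZ_mul_shiftX (N : ℕ) (hN : 0 < N) :
    clockZ N * shiftX N = omegaN N • (shiftX N * clockZ N) := by
  ext j l
  simp only [clockZ, Matrix.diagonal_mul, Matrix.mul_diagonal, Matrix.smul_apply,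
    shiftX, Matrix.of_apply, smul_eq_mul]
  by_cases h : (j : ℕ) = ((l : ℕ) + 1) % N
  · rw [if_pos h, h, pow_mod_eq (omegaN_pow_N N hN), pow_succ]; ring
  · rw [if_neg h]; ring

lemma clockZ_mul_shiftXH (N : ℕ) (hN : 0 < N) :
    clockZ N * (shiftX N)ᴴ = (omegaN N)⁻¹ • ((shiftX N)ᴴ * clockZ N) := by
  ext j l
  simp only [clockZ, Matrix.diagonal_mul, Matrix.mul_diagonal, Matrix.smul_apply,
    Matrix.conjTranspose_apply, shiftX, Matrix.of_apply, smul_eq_mul]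
  by_cases h : (l : ℕ) = ((j : ℕ) + 1) % N
  · rw [if_pos h, h, pow_mod_eq (omegaN_pow_N N hN), pow_succ]
    field_simp [omegaN_ne_zero]
  · rw [if_neg h]
    simp
lemma shiftX_mul_clockZH (N : ℕ) (hN : 0 < N) :
    shiftX N * (clockZ N)ᴴ = omegaN N • ((clockZ N)ᴴ * shiftX N) := by
  ext j l
  simp only [clockZ, Matrix.diagonal_conjTranspose, Matrix.diagonal_mul, Matrix.mul_diagonal,
    Matrix.smul_apply, shiftX, Matrix.of_apply, smul_eq_mul, Pi.star_apply, RCLike.star_def,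
    _root_.map_pow, conj_omegaN, ← inv_pow]
  by_cases h : (j : ℕ) = ((l : ℕ) + 1) % N
  · rw [if_pos h, h, pow_mod_eq (inv_omegaN_pow_N N hN), pow_succ]
    field_simp [omegaN_ne_zero]
  · rw [if_neg h]; ring

lemma shiftX_mul_clockZ (N : ℕ) (hN : 0 < N) :
    shiftX N * clockZ N = (omegaN N)⁻¹ • (clockZ N * shiftX N) := by
  rw [clockZ_mul_shiftX N hN, inv_smul_smul₀ (omegaN_ne_zero N)]

lemma clockZ_mul_conjTranspose (N : ℕ) : clockZ N * (clockZ N)ᴴ = 1 := by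
  rw [clockZ, Matrix.diagonal_conjTranspose, Matrix.diagonal_mul_diagonal]
  convert Matrix.diagonal_one with j
  simp only [Pi.star_apply, RCLike.star_def, _root_.map_pow, conj_omegaN, ← inv_pow, ← mul_pow,
    mul_inv_cancel₀ (omegaN_ne_zero N), one_pow]

lemma clockZ_conjTranspose_mul (N : ℕ) : (clockZ N)ᴴ * clockZ N = 1 := by
  rw [clockZ, Matrix.diagonal_conjTranspose, Matrix.diagonal_mul_diagonal]
  convert Matrix.diagonal_one with j
  simp only [Pi.star_apply, RCLike.star_def, _root_.map_pow, conj_omegaN, ← inv_pow, ← mul_pow,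
    inv_mul_cancel₀ (omegaN_ne_zero N), one_pow]

lemma shiftX_mul_conjTranspose (N : ℕ) (hN : 0 < N) : shiftX N * (shiftX N)ᴴ = 1 := by
  haveI : NeZero N := ⟨hN.ne'⟩
  ext j l
  simp only [Matrix.mul_apply, Matrix.conjTranspose_apply, shiftX_apply N, apply_ite star,
    star_one, star_zero, ite_mul, one_mul, zero_mul, Matrix.one_apply]
  rw [Finset.sum_congr rfl (fun m _ => ?_), Finset.sum_ite_eq' Finset.univ (j - 1)
    (fun m => if l = m + 1 then (1 : ℂ) else 0)]
  · simp [sub_add_cancel, eq_comm]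
  · congr 1
    rw [eq_iff_iff]
    constructor
    · intro h; rw [h]; exact (add_sub_cancel_right m 1).symm
    · intro h; rw [h, sub_add_cancel]

lemma shiftX_conjTranspose_mul (N : ℕ) (hN : 0 < N) : (shiftX N)ᴴ * shiftX N = 1 := by
  haveI : NeZero N := ⟨hN.ne'⟩
  ext j l
  simp only [Matrix.mul_apply, Matrix.conjTranspose_apply, shiftX_apply N, apply_ite star,
    star_one, star_zero, ite_mul, one_mul, zero_mul, Matrix.one_apply]
  rw [Finset.sum_congr rfl (fun m _ => ?_), Finset.sum_ite_eq' Finset.univ (j + 1)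
    (fun m => if m = l + 1 then (1 : ℂ) else 0)]
  · simp [eq_comm, add_left_inj]
  · rfl

/-- The clock matrix as a unit. -/
def clockZU (N : ℕ) : (Matrix (Fin N) (Fin N) ℂ)ˣ :=
  ⟨clockZ N, (clockZ N)ᴴ, clockZ_mul_conjTranspose N, clockZ_conjTranspose_mul N⟩

/-- The shift matrix as a unit. -/
def shiftXU (N : ℕ) (hN : 0 < N) : (Matrix (Fin N) (Fin N) ℂ)ˣ :=
  ⟨shiftX N, (shiftX N)ᴴ, shiftX_mul_conjTranspose N hN, shiftX_conjTranspose_mul N hN⟩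

set_option maxHeartbeats 800000 in
lemma unit_zpow_comm {n : ℕ} (u : (Matrix (Fin n) (Fin n) ℂ)ˣ)
    (A : Matrix (Fin n) (Fin n) ℂ) (c : ℂ) (hc : c ≠ 0)
    (h : (u : Matrix (Fin n) (Fin n) ℂ) * A = c • (A * (u : Matrix (Fin n) (Fin n) ℂ))) :
    ∀ m : ℤ, ((u ^ m : (Matrix (Fin n) (Fin n) ℂ)ˣ) : Matrix (Fin n) (Fin n) ℂ) * A
      = c ^ m • (A * ((u ^ m : (Matrix (Fin n) (Fin n) ℂ)ˣ) : Matrix (Fin n) (Fin n) ℂ)) := by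
  have hAu : A * (u : Matrix (Fin n) (Fin n) ℂ) = c⁻¹ • ((u : Matrix (Fin n) (Fin n) ℂ) * A) := by
    rw [h, smul_smul, inv_mul_cancel₀ hc, one_smul]
  have h' : ((u⁻¹ : (Matrix (Fin n) (Fin n) ℂ)ˣ) : Matrix (Fin n) (Fin n) ℂ) * A
      = c⁻¹ • (A * ((u⁻¹ : (Matrix (Fin n) (Fin n) ℂ)ˣ) : Matrix (Fin n) (Fin n) ℂ)) := by
    calc ((u⁻¹ : (Matrix (Fin n) (Fin n) ℂ)ˣ) : Matrix (Fin n) (Fin n) ℂ) * A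
        = ↑u⁻¹ * (A * ↑u) * ↑u⁻¹ := by
          rw [mul_assoc, mul_assoc, Units.mul_inv, mul_one]
      _ = ↑u⁻¹ * (c⁻¹ • ((u : Matrix (Fin n) (Fin n) ℂ) * A)) * ↑u⁻¹ := by rw [hAu]
      _ = c⁻¹ • (A * ↑u⁻¹) := by
          rw [mul_smul_comm, smul_mul_assoc, ← mul_assoc, Units.inv_mul, one_mul]
  intro m
  induction m using Int.induction_on with
  | zero => simp
  | succ i ih =>
      rw [_root_.zpow_add_one, zpow_add_one₀ hc, Units.val_mul, mul_assoc, h, mul_smul_comm,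
        ← mul_assoc, ih, smul_mul_assoc, smul_smul, mul_comm c, mul_assoc]
  | pred i ih =>
      rw [_root_.zpow_sub_one, zpow_sub_one₀ hc, Units.val_mul, mul_assoc, h', mul_smul_comm,
        ← mul_assoc, ih, smul_mul_assoc, smul_smul, mul_comm c⁻¹, mul_assoc]

lemma unit_zpow_conj {n : ℕ} (u : (Matrix (Fin n) (Fin n) ℂ)ˣ)
    (A : Matrix (Fin n) (Fin n) ℂ) (c : ℂ) (hc : c ≠ 0)
    (h : (u : Matrix (Fin n) (Fin n) ℂ) * A = c • (A * (u : Matrix (Fin n) (Fin n) ℂ)))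
    (m : ℤ) :
    ((u ^ m : (Matrix (Fin n) (Fin n) ℂ)ˣ) : Matrix (Fin n) (Fin n) ℂ) * A
      * (((u ^ m)⁻¹ : (Matrix (Fin n) (Fin n) ℂ)ˣ) : Matrix (Fin n) (Fin n) ℂ) = c ^ m • A := by
  rw [unit_zpow_comm u A c hc h m, smul_mul_assoc, mul_assoc, Units.mul_inv, mul_one]

lemma exp_shift (N : ℕ) (t : ℝ) (m : ℤ) :
    Complex.exp (Complex.I * ((t + 2 * Real.pi * m / N : ℝ) : ℂ))
      = omegaN N ^ m * Complex.exp (Complex.I * t) := by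
  rw [show (Complex.I * ((t + 2 * Real.pi * m / N : ℝ) : ℂ))
      = Complex.I * t + m * (2 * Real.pi * Complex.I / N) by push_cast; ring,
    Complex.exp_add, Complex.exp_int_mul, omegaN]
  ring

lemma exp_shift_neg (N : ℕ) (t : ℝ) (m : ℤ) :
    Complex.exp (-(Complex.I * ((t + 2 * Real.pi * m / N : ℝ) : ℂ)))
      = omegaN N ^ (-m) * Complex.exp (-(Complex.I * t)) := by
  rw [show (-(Complex.I * ((t + 2 * Real.pi * m / N : ℝ) : ℂ)))
      = -(Complex.I * t) + (-m : ℤ) * (2 * Real.pi * Complex.I / N) by push_cast; ring,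
    Complex.exp_add, Complex.exp_int_mul, omegaN]
  ring

set_option maxHeartbeats 1600000 in
lemma harper_conj (N : ℕ) (hN : 0 < N) (a ε μ μ2 τ₀ b φ₀ τ : ℝ) (j k : ℤ) :
    harperH N a ε μ μ2 τ₀ (b + 2 * Real.pi * j / N) (φ₀ + 2 * Real.pi * k / N) τ
      = (↑(clockZU N ^ j * shiftXU N hN ^ k) : Matrix (Fin N) (Fin N) ℂ)
          * harperH N a ε μ μ2 τ₀ b φ₀ τ
        * (↑((clockZU N ^ j * shiftXU N hN ^ k)⁻¹) : Matrix (Fin N) (Fin N) ℂ) := by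
  set u := clockZU N with hu
  set v := shiftXU N hN with hv
  have hvv : (v : Matrix (Fin N) (Fin N) ℂ) = shiftX N := rfl
  have huu : (u : Matrix (Fin N) (Fin N) ℂ) = clockZ N := rfl
  have hUdec : ∀ A : Matrix (Fin N) (Fin N) ℂ,
      (↑(u ^ j * v ^ k) : Matrix (Fin N) (Fin N) ℂ) * A
          * (↑((u ^ j * v ^ k)⁻¹) : Matrix (Fin N) (Fin N) ℂ)
        = (↑(u ^ j) : Matrix (Fin N) (Fin N) ℂ)
            * ((↑(v ^ k) : Matrix (Fin N) (Fin N) ℂ) * A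
              * (↑((v ^ k)⁻¹) : Matrix (Fin N) (Fin N) ℂ))
            * (↑((u ^ j)⁻¹) : Matrix (Fin N) (Fin N) ℂ) := by
    intro A
    rw [_root_.mul_inv_rev, Units.val_mul, Units.val_mul]
    simp only [mul_assoc]
  have hωne := omegaN_ne_zero N
  have hX : (↑(u ^ j * v ^ k) : Matrix (Fin N) (Fin N) ℂ) * shiftX N
      * (↑((u ^ j * v ^ k)⁻¹) : Matrix (Fin N) (Fin N) ℂ) = omegaN N ^ j • shiftX N := by
    rw [hUdec, unit_zpow_conj v (shiftX N) 1 one_ne_zero (by rw [one_smul, hvv]),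
      _root_.one_zpow, one_smul, unit_zpow_conj u (shiftX N) (omegaN N) hωne
        (by rw [huu]; exact clockZ_mul_shiftX N hN)]
  have hXH : (↑(u ^ j * v ^ k) : Matrix (Fin N) (Fin N) ℂ) * (shiftX N)ᴴ
      * (↑((u ^ j * v ^ k)⁻¹) : Matrix (Fin N) (Fin N) ℂ)
      = omegaN N ^ (-j) • (shiftX N)ᴴ := by
    rw [hUdec, unit_zpow_conj v ((shiftX N)ᴴ) 1 one_ne_zero
        (by rw [one_smul, hvv, shiftX_mul_conjTranspose N hN, shiftX_conjTranspose_mul N hN]),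
      _root_.one_zpow, one_smul, unit_zpow_conj u ((shiftX N)ᴴ) (omegaN N)⁻¹ (inv_ne_zero hωne)
        (by rw [huu]; exact clockZ_mul_shiftXH N hN), _root_.inv_zpow, ← _root_.zpow_neg]
  have hZ : (↑(u ^ j * v ^ k) : Matrix (Fin N) (Fin N) ℂ) * clockZ N
      * (↑((u ^ j * v ^ k)⁻¹) : Matrix (Fin N) (Fin N) ℂ)
      = omegaN N ^ (-k) • clockZ N := by
    rw [hUdec, unit_zpow_conj v (clockZ N) (omegaN N)⁻¹ (inv_ne_zero hωne)
        (by rw [hvv]; exact shiftX_mul_clockZ N hN), mul_smul_comm, smul_mul_assoc,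
      unit_zpow_conj u (clockZ N) 1 one_ne_zero (by rw [one_smul, huu]),
      _root_.one_zpow, one_smul, _root_.inv_zpow, ← _root_.zpow_neg]
  have hZH : (↑(u ^ j * v ^ k) : Matrix (Fin N) (Fin N) ℂ) * (clockZ N)ᴴ
      * (↑((u ^ j * v ^ k)⁻¹) : Matrix (Fin N) (Fin N) ℂ)
      = omegaN N ^ k • (clockZ N)ᴴ := by
    rw [hUdec, unit_zpow_conj v ((clockZ N)ᴴ) (omegaN N) hωne
        (by rw [hvv]; exact shiftX_mul_clockZH N hN), mul_smul_comm, smul_mul_assoc,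
      unit_zpow_conj u ((clockZ N)ᴴ) 1 one_ne_zero
        (by rw [one_smul, huu, clockZ_mul_conjTranspose N, clockZ_conjTranspose_mul N]),
      _root_.one_zpow, one_smul]
  have h1 : (↑(u ^ j * v ^ k) : Matrix (Fin N) (Fin N) ℂ) * (1 : Matrix (Fin N) (Fin N) ℂ)
      * (↑((u ^ j * v ^ k)⁻¹) : Matrix (Fin N) (Fin N) ℂ) = 1 := by
    rw [mul_one, Units.mul_inv]
  simp only [harperH, harperH0, harperH1]
  rw [exp_shift N b j, exp_shift_neg N b j, exp_shift N φ₀ k, exp_shift_neg N φ₀ k]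
  simp only [Matrix.mul_add, Matrix.add_mul, Matrix.mul_sub, Matrix.sub_mul, Matrix.mul_smul,
    Matrix.smul_mul, hX, hXH, hZ, hZH, h1]
  match_scalars <;> ring

lemma list_conj {n : ℕ} (U : (Matrix (Fin n) (Fin n) ℂ)ˣ) :
    ∀ (M : ℕ) (g : Fin M → Matrix (Fin n) (Fin n) ℂ),
    (List.ofFn fun m => (↑U : Matrix (Fin n) (Fin n) ℂ) * g m
        * (↑U⁻¹ : Matrix (Fin n) (Fin n) ℂ)).prod
      = (↑U : Matrix (Fin n) (Fin n) ℂ) * (List.ofFn g).prod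
        * (↑U⁻¹ : Matrix (Fin n) (Fin n) ℂ)
  | 0, g => by
      rw [List.ofFn_zero, List.ofFn_zero, List.prod_nil, mul_one, Units.mul_inv]
  | (M + 1), g => by
      rw [List.ofFn_succ, List.ofFn_succ, List.prod_cons, List.prod_cons,
        list_conj U M (fun i => g i.succ)]
      simp only [mul_assoc, Units.inv_mul_cancel_left]

/-- (Corollary to Theorem B.1, Trotterized form) The ordered product of matrix
exponentials defining the Trotterized propagator with shifted angle parameters equals
the conjugation by clock and shift operators of the unshifted ordered product. -/
theorem trotter_propagator_shift_conj (N : ℕ) (hN : 0 < N)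
    (a ε μ μ2 τ₀ b φ₀ : ℝ) (j k : ℤ) (M : ℕ) (c τs : Fin M → ℝ) :
    (List.ofFn fun m : Fin M =>
        NormedSpace.exp ((-(Complex.I * (c m : ℂ))) •
          harperH N a ε μ μ2 τ₀ (b + 2 * Real.pi * j / N)
            (φ₀ + 2 * Real.pi * k / N) (τs m))).prod
      = clockZ N ^ j * shiftX N ^ k *
          (List.ofFn fun m : Fin M =>
            NormedSpace.exp ((-(Complex.I * (c m : ℂ))) •
              harperH N a ε μ μ2 τ₀ b φ₀ (τs m))).prod
          * shiftX N ^ (-k) * clockZ N ^ (-j) := by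
  set u := clockZU N with hu
  set v := shiftXU N hN with hv
  set U : (Matrix (Fin N) (Fin N) ℂ)ˣ := u ^ j * v ^ k with hU
  have hfun : (fun m : Fin M =>
      NormedSpace.exp ((-(Complex.I * (c m : ℂ))) •
        harperH N a ε μ μ2 τ₀ (b + 2 * Real.pi * j / N)
          (φ₀ + 2 * Real.pi * k / N) (τs m)))
      = fun m : Fin M => (↑U : Matrix (Fin N) (Fin N) ℂ) *
          NormedSpace.exp ((-(Complex.I * (c m : ℂ))) •
            harperH N a ε μ μ2 τ₀ b φ₀ (τs m)) * (↑U⁻¹ : Matrix (Fin N) (Fin N) ℂ) := by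
    funext m
    rw [harper_conj N hN a ε μ μ2 τ₀ b φ₀ (τs m) j k, ← Matrix.smul_mul, ← Matrix.mul_smul]
    exact Matrix.exp_units_conj U _
  rw [hfun, list_conj U M _]
  have hZj : clockZ N ^ j = (↑(u ^ j) : Matrix (Fin N) (Fin N) ℂ) :=
    (Matrix.coe_units_zpow u j).symm
  have hXk : shiftX N ^ k = (↑(v ^ k) : Matrix (Fin N) (Fin N) ℂ) :=
    (Matrix.coe_units_zpow v k).symm
  have hXk' : shiftX N ^ (-k) = (↑((v ^ k)⁻¹) : Matrix (Fin N) (Fin N) ℂ) := by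
    rw [← _root_.zpow_neg v k, Matrix.coe_units_zpow]
    rfl
  have hZj' : clockZ N ^ (-j) = (↑((u ^ j)⁻¹) : Matrix (Fin N) (Fin N) ℂ) := by
    rw [← _root_.zpow_neg u j, Matrix.coe_units_zpow]
    rfl
  rw [hZj, hXk, hXk', hZj', hU, _root_.mul_inv_rev, Units.val_mul, Units.val_mul]
  simp only [mul_assoc]
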